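/- Let H be a graph with a root o and fix an integer r ≥ 1. Set R := 3r+1. For any two non-empty finite subsets A, B ⊆ V(H) such that B is r-nice and d(A,B) > 3r, there is some L_0 = L_0(A,B) such that for all L ≥ L_0 the following holds: if an edge e is p-pivotal for the event E_L^{A,B} in a configuration (ω,α), then there exist a configuration (ω',α') differing from (ω,α) only inside B_R(e) and a vertex z ∈ B_R(e) such that z is s-pivotal for E_L^{A,B} in (ω',α'). Here E_L^{A,B} := {(ω,α) : C_A(ω_L, α_L) ∩ B ≠ ∅}, where ω_L (resp. α_L) equals ω (resp. α) on edges (resp. vertices) inside B_L(o) and equals 0 elsewhere. -/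

import Mathlib

open MeasureTheory

namespace Percolation

variable {V : Type*} {W : Type*}

/-- The ball of radius `k` around `x` for the graph distance. -/
def ball (G : SimpleGraph V) (x : V) (k : ℕ) : Set V := {y | G.dist x y ≤ k}

/-- The sphere of radius `k` around `x` for the graph distance. -/
def sphere (G : SimpleGraph V) (x : V) (k : ℕ) : Set V := {y | G.dist x y = k}

/-- A graph is locally finite if every vertex has finitely many neighbours. -/
def LocallyFinite' (G : SimpleGraph V) : Prop := ∀ v : V, (G.neighborSet v).Finite

/-- A graph has bounded degree if there is a uniform finite bound on the number of
neighbours of any vertex. -/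
def BoundedDegree (G : SimpleGraph V) : Prop :=
  ∃ D : ℕ, ∀ v : V, (G.neighborSet v).Finite ∧ (G.neighborSet v).ncard ≤ D

/-- A graph is quasi-transitive if the action of its automorphism group on its vertices
has finitely many orbits. -/
def QuasiTransitive (G : SimpleGraph V) : Prop :=
  ∃ S : Set V, S.Finite ∧ ∀ v : V, ∃ s ∈ S, ∃ φ : G ≃g G, φ s = v

/-- The graph of `ω`-open edges of a percolation configuration `ω` on `G`. -/
def openGraph (G : SimpleGraph V) (ω : G.edgeSet → Bool) : SimpleGraph V where
  Adj x y := ∃ h : G.Adj x y, ω ⟨s(x, y), (SimpleGraph.mem_edgeSet G).mpr h⟩ = true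
  symm := by
    constructor
    rintro x y ⟨h, hw⟩
    refine ⟨h.symm, ?_⟩
    have heq : (⟨s(y, x), (SimpleGraph.mem_edgeSet G).mpr h.symm⟩ : G.edgeSet)
        = ⟨s(x, y), (SimpleGraph.mem_edgeSet G).mpr h⟩ := Subtype.ext (Sym2.eq_swap)
    rw [heq]; exact hw
  loopless := by constructor; rintro x ⟨h, -⟩; exact G.ne_of_adj h rfl

/-- The open cluster of the vertex `x` in the configuration `ω`. -/
def cluster (G : SimpleGraph V) (ω : G.edgeSet → Bool) (x : V) : Set V :=
  {y | (openGraph G ω).Reachable x y}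

/-- The open cluster of a set `A` of vertices in the configuration `ω`. -/
def clusterOf (G : SimpleGraph V) (ω : G.edgeSet → Bool) (A : Set V) : Set V :=
  {y | ∃ x ∈ A, (openGraph G ω).Reachable x y}

/-- The event that some open path intersects both `A` and `B`. -/
def connectedEvent (G : SimpleGraph V) (A B : Set V) : Set (G.edgeSet → Bool) :=
  {ω | ∃ a ∈ A, ∃ b ∈ B, (openGraph G ω).Reachable a b}

/-- `μ` is the Bernoulli product measure `⊗_{i ∈ ι} Ber(p)` on `ι → Bool`:
a probability measure giving every finite cylinder event its product probability. -/
def IsBernoulliProduct {ι : Type*} (p : ℝ) (μ : Measure (ι → Bool)) : Prop :=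
  IsProbabilityMeasure μ ∧
    ∀ (t : Finset ι) (f : ι → Bool),
      μ {ω | ∀ i ∈ t, ω i = f i} =
        ∏ i ∈ t, ENNReal.ofReal (if f i then p else 1 - p)

/-- `μ` is the product measure `Ber(p)^{⊗ι} ⊗ Ber(s)^{⊗κ}` on `(ι → Bool) × (κ → Bool)`. -/
def IsBernoulliPair {ι κ : Type*} (p s : ℝ)
    (μ : Measure ((ι → Bool) × (κ → Bool))) : Prop :=
  IsProbabilityMeasure μ ∧
    ∀ (t : Finset ι) (u : Finset κ) (f : ι → Bool) (g : κ → Bool),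
      μ {c | (∀ i ∈ t, c.1 i = f i) ∧ (∀ j ∈ u, c.2 j = g j)} =
        (∏ i ∈ t, ENNReal.ofReal (if f i then p else 1 - p)) *
          ∏ j ∈ u, ENNReal.ofReal (if g j then s else 1 - s)

/-- The critical parameter `p_c` of a graph: the infimum of those `p ∈ [0,1]` for which
Bernoulli(p) bond percolation produces an infinite cluster with positive probability
(with the convention that it equals `1` when no such `p` exists). -/
noncomputable def pc (G : SimpleGraph V) : ℝ :=
  sInf ({p : ℝ | p ∈ Set.Icc (0 : ℝ) 1 ∧
    ∀ μ : Measure (G.edgeSet → Bool), IsBernoulliProduct p μ →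
      0 < μ {ω | ∃ x : V, (cluster G ω x).Infinite}} ∪ {1})

/-- The uniqueness parameter `p_u` of a graph: the infimum of those `p ∈ [0,1]` for which
Bernoulli(p) bond percolation produces exactly one infinite cluster almost surely
(with the convention that it equals `1` when no such `p` exists). -/
noncomputable def pu (G : SimpleGraph V) : ℝ :=
  sInf ({p : ℝ | p ∈ Set.Icc (0 : ℝ) 1 ∧
    ∀ μ : Measure (G.edgeSet → Bool), IsBernoulliProduct p μ →
      μ {ω | ∃! C : (openGraph G ω).ConnectedComponent, C.supp.Infinite} = 1} ∪ {1})

/-- A weak covering map: 1-Lipschitz for the graph distances, and every edge at `π x`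
lifts to an edge at `x`. -/
structure IsWeakCover (G : SimpleGraph V) (H : SimpleGraph W) (π : V → W) : Prop where
  lipschitz : ∀ x y : V, H.dist (π x) (π y) ≤ G.dist x y
  lift : ∀ x : V, ∀ u : W, H.Adj (π x) u → ∃ y : V, G.Adj x y ∧ π y = u

/-- A strong covering map: 1-Lipschitz for the graph distances, and every edge at `π x`
lifts to a *unique* edge at `x`. -/
structure IsStrongCover (G : SimpleGraph V) (H : SimpleGraph W) (π : V → W) : Prop where
  lipschitz : ∀ x y : V, H.dist (π x) (π y) ≤ G.dist x y
  lift : ∀ x : V, ∀ u : W, H.Adj (π x) u → ∃! y : V, G.Adj x y ∧ π y = u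

/-- `π` has tame fibres: for some `R`, every vertex has another vertex of its fibre
within distance `R`. -/
def TameFibres (G : SimpleGraph V) (π : V → W) : Prop :=
  ∃ R : ℕ, ∀ x : V, ∃ y : V, π x = π y ∧ 0 < G.dist x y ∧ G.dist x y ≤ R

/-- `π` has bounded fibres: fibres have uniformly bounded diameter. -/
def BoundedFibres (G : SimpleGraph V) (π : V → W) : Prop :=
  ∃ K : ℕ, ∀ x y : V, π x = π y → G.dist x y ≤ K

/-- `T'` is a lift of the subtree `T` through `π`: a subtree of `G` such that `π` induces
a graph isomorphism from `T'` onto `T`. -/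
def IsLift (G : SimpleGraph V) (H : SimpleGraph W) (π : V → W)
    (T : H.Subgraph) (T' : G.Subgraph) : Prop :=
  T'.coe.IsTree ∧ Set.BijOn π T'.verts T.verts ∧
    ∀ x y : V, x ∈ T'.verts → y ∈ T'.verts → (T'.Adj x y ↔ T.Adj (π x) (π y))

/-- The disjoint tree-lifting property of `π`. -/
def HasDisjointTreeLifting (G : SimpleGraph V) (H : SimpleGraph W) (π : V → W) : Prop :=
  ∀ T : H.Subgraph, T.coe.IsTree →
    ∀ x y : V, x ≠ y → π x = π y → π x ∈ T.verts →
      ∃ Tx Ty : G.Subgraph, IsLift G H π T Tx ∧ IsLift G H π T Ty ∧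
        x ∈ Tx.verts ∧ y ∈ Ty.verts ∧ Disjoint Tx.verts Ty.verts

/-- All edges with both endpoints in the ball `B_r(u)` are `ω`-open. -/
def fullyOpen (H : SimpleGraph V) (r : ℕ) (ω : H.edgeSet → Bool) (u : V) : Prop :=
  ∀ e : H.edgeSet, (∀ z ∈ (e : Sym2 V), H.dist u z ≤ r) → ω e = true

/-- The enhancement step: add all vertices `v` at distance exactly `r+1` from a vertex
`u` of `S` whose `r`-ball is fully open and with `α u = 1`. -/
def enhance (H : SimpleGraph V) (r : ℕ) (ω : H.edgeSet → Bool) (α : V → Bool)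
    (S : Set V) : Set V :=
  S ∪ {v | ∃ u ∈ S, H.dist u v = r + 1 ∧ fullyOpen H r ω u ∧ α u = true}

/-- The sequence `C_n` of the enhanced exploration started from `A`: odd steps spread
along open clusters, even steps perform the enhancement. -/
def enhSeq (H : SimpleGraph V) (r : ℕ) (ω : H.edgeSet → Bool) (α : V → Bool)
    (A : Set V) : ℕ → Set V
  | 0 => A
  | n + 1 =>
      if n % 2 = 0 then clusterOf H ω (enhSeq H r ω α A n)
      else enhance H r ω α (enhSeq H r ω α A n)

/-- The enhanced cluster `C_A(ω, α)`. -/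
def enhCluster (H : SimpleGraph V) (r : ℕ) (ω : H.edgeSet → Bool) (α : V → Bool)
    (A : Set V) : Set V := ⋃ n, enhSeq H r ω α A n

open scoped Classical in
/-- Set the state of the edge `e` to `b`. -/
noncomputable def flipE (H : SimpleGraph V) (ω : H.edgeSet → Bool) (e : H.edgeSet)
    (b : Bool) : H.edgeSet → Bool := Function.update ω e b

open scoped Classical in
/-- Set the state of the vertex `v` to `b`. -/
noncomputable def flipV (α : V → Bool) (v : V) (b : Bool) : V → Bool :=
  Function.update α v b

/-- The edge `e` is p-pivotal for the event `E` in the configuration `c`. -/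
def PPivotal (H : SimpleGraph V) (E : Set ((H.edgeSet → Bool) × (V → Bool)))
    (e : H.edgeSet) (c : (H.edgeSet → Bool) × (V → Bool)) : Prop :=
  (flipE H c.1 e true, c.2) ∈ E ∧ (flipE H c.1 e false, c.2) ∉ E

/-- The vertex `z` is s-pivotal for the event `E` in the configuration `c`. -/
def SPivotal (H : SimpleGraph V) (E : Set ((H.edgeSet → Bool) × (V → Bool)))
    (z : V) (c : (H.edgeSet → Bool) × (V → Bool)) : Prop :=
  (c.1, flipV c.2 z true) ∈ E ∧ (c.1, flipV c.2 z false) ∉ E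

/-- For an edge `e = {x,y}`, the set `B_R(e) = B_R(x) ∪ B_R(y)`. -/
def edgeBall (H : SimpleGraph V) (e : H.edgeSet) (R : ℕ) : Set V :=
  {z | ∃ w ∈ (e : Sym2 V), H.dist w z ≤ R}

/-- The connected component of `x` inside the subgraph of `G` induced by `S`
(as a subset of the vertices of `G`). -/
def compIn (G : SimpleGraph V) (S : Set V) (x : V) : Set V :=
  {y | ∃ w : G.Walk x y, ∀ z ∈ w.support, z ∈ S}

/-- The quotient graph `G/Γ`: vertices are the orbits, two distinct orbits being adjacent
iff some edge of `G` intersects both. -/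
def quotientGraph (G : SimpleGraph V) (Γ : Type*) [Group Γ] [MulAction Γ V] :
    SimpleGraph (Quotient (MulAction.orbitRel Γ V)) where
  Adj a b := a ≠ b ∧ ∃ x y : V, G.Adj x y ∧
      Quotient.mk (MulAction.orbitRel Γ V) x = a ∧ Quotient.mk (MulAction.orbitRel Γ V) y = b
  symm := by constructor; rintro a b ⟨hne, x, y, hxy, hx, hy⟩; exact ⟨hne.symm, y, x, hxy.symm, hy, hx⟩
  loopless := by constructor; rintro a ⟨hne, -⟩; exact hne rfl

open scoped Classical in
/-- The configuration `ω_L`: agrees with `ω` on edges inside `B_L(o)`, closed elsewhere. -/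
noncomputable def truncE (H : SimpleGraph V) (o : V) (L : ℕ) (ω : H.edgeSet → Bool) :
    H.edgeSet → Bool :=
  fun e => if ∀ z ∈ (e : Sym2 V), H.dist o z ≤ L then ω e else false

/-- The configuration `α_L`: agrees with `α` on vertices of `B_L(o)`, `0` elsewhere. -/
noncomputable def truncV (H : SimpleGraph V) (o : V) (L : ℕ) (α : V → Bool) : V → Bool :=
  fun v => if H.dist o v ≤ L then α v else false

/-- `B` is `r`-nice: finite, non-empty, and every vertex outside of `B` belongs to some
`r`-ball avoiding `B`. -/
def RNice (H : SimpleGraph V) (r : ℕ) (B : Set V) : Prop :=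
  B.Finite ∧ B.Nonempty ∧ ∀ u ∉ B, ∃ v : V, u ∈ ball H v r ∧ ∀ w ∈ ball H v r, w ∉ B

/-! ### Auxiliary machinery for the proof -/

section Aux

variable {H : SimpleGraph V}

lemma mem_of_reachable {ω : H.edgeSet → Bool} {X : Set V}
    (hX : ∀ a ∈ X, ∀ b, (openGraph H ω).Adj a b → b ∈ X)
    {p q : V} (hp : p ∈ X) (h : (openGraph H ω).Reachable p q) : q ∈ X := by
  obtain ⟨w⟩ := h
  induction w with
  | nil => exact hp
  | cons h' w' ih => exact ih (hX _ hp _ h')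

/-- A set closed under the two operations of the enhanced exploration. -/
def EnhClosed (H : SimpleGraph V) (r : ℕ) (ω : H.edgeSet → Bool) (β : V → Bool)
    (X : Set V) : Prop :=
  (∀ a ∈ X, ∀ b, (openGraph H ω).Adj a b → b ∈ X) ∧
  (∀ u ∈ X, β u = true → fullyOpen H r ω u → ∀ v, H.dist u v = r + 1 → v ∈ X)

lemma clusterOf_subset_of_closed {ω : H.edgeSet → Bool} {X S : Set V}
    (hS : S ⊆ X) (hX : ∀ a ∈ X, ∀ b, (openGraph H ω).Adj a b → b ∈ X) :
    clusterOf H ω S ⊆ X := by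
  rintro y ⟨x, hxS, hreach⟩
  exact mem_of_reachable hX (hS hxS) hreach

lemma enhance_subset_of_closed {r : ℕ} {ω : H.edgeSet → Bool} {β : V → Bool} {X S : Set V}
    (hS : S ⊆ X)
    (hX : ∀ u ∈ X, β u = true → fullyOpen H r ω u → ∀ v, H.dist u v = r + 1 → v ∈ X) :
    enhance H r ω β S ⊆ X := by
  rintro y (hy | ⟨u, huS, hd, hfo, hβ⟩)
  · exact hS hy
  · exact hX u (hS huS) hβ hfo y hd

lemma enhSeq_subset_of_closed {r : ℕ} {ω : H.edgeSet → Bool} {β : V → Bool} {X A : Set V}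
    (hA : A ⊆ X) (hX : EnhClosed H r ω β X) : ∀ n, enhSeq H r ω β A n ⊆ X := by
  intro n
  induction n with
  | zero => exact hA
  | succ n ih =>
      show enhSeq H r ω β A (n+1) ⊆ X
      rw [enhSeq]
      split
      · exact clusterOf_subset_of_closed ih hX.1
      · exact enhance_subset_of_closed ih hX.2

lemma enhCluster_subset_of_closed {r : ℕ} {ω : H.edgeSet → Bool} {β : V → Bool} {X A : Set V}
    (hA : A ⊆ X) (hX : EnhClosed H r ω β X) : enhCluster H r ω β A ⊆ X :=
  Set.iUnion_subset fun n => enhSeq_subset_of_closed hA hX n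

lemma subset_enhSeq_succ {r : ℕ} {ω : H.edgeSet → Bool} {β : V → Bool} {A : Set V} (n : ℕ) :
    enhSeq H r ω β A n ⊆ enhSeq H r ω β A (n + 1) := by
  rw [enhSeq]
  split
  · exact fun x hx => ⟨x, hx, SimpleGraph.Reachable.refl x⟩
  · exact fun x hx => Or.inl hx

lemma enhSeq_mono {r : ℕ} {ω : H.edgeSet → Bool} {β : V → Bool} {A : Set V} {n m : ℕ}
    (h : n ≤ m) : enhSeq H r ω β A n ⊆ enhSeq H r ω β A m := by
  induction h with
  | refl => exact subset_rfl
  | step _ ih => exact fun x hx => subset_enhSeq_succ _ (ih hx)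

lemma subset_enhCluster {r : ℕ} {ω : H.edgeSet → Bool} {β : V → Bool} {A : Set V} :
    A ⊆ enhCluster H r ω β A :=
  fun x hx => Set.mem_iUnion.mpr ⟨0, hx⟩

lemma enhClosed_enhCluster {r : ℕ} {ω : H.edgeSet → Bool} {β : V → Bool} {A : Set V} :
    EnhClosed H r ω β (enhCluster H r ω β A) := by
  constructor
  · intro a ha b hab
    obtain ⟨n, hn⟩ := Set.mem_iUnion.mp ha
    have h2n : a ∈ enhSeq H r ω β A (2 * n) :=
      enhSeq_mono (Nat.le_mul_of_pos_left n (by norm_num)) hn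
    have : b ∈ enhSeq H r ω β A (2 * n + 1) := by
      rw [enhSeq, if_pos (Nat.mul_mod_right 2 n)]
      exact ⟨a, h2n, hab.reachable⟩
    exact Set.mem_iUnion.mpr ⟨2 * n + 1, this⟩
  · intro u hu hβ hfo v hd
    obtain ⟨n, hn⟩ := Set.mem_iUnion.mp hu
    have h2n : u ∈ enhSeq H r ω β A (2 * n + 1) := enhSeq_mono (by omega) hn
    have : v ∈ enhSeq H r ω β A (2 * n + 2) := by
      rw [show 2*n+2 = (2*n+1)+1 from rfl, enhSeq, if_neg (by omega)]
      exact Or.inr ⟨u, h2n, hd, hfo, hβ⟩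
    exact Set.mem_iUnion.mpr ⟨2 * n + 2, this⟩

lemma enhClosed_union {r : ℕ} {ω : H.edgeSet → Bool} {β : V → Bool} {X Y : Set V}
    (hX : EnhClosed H r ω β X) (hY : EnhClosed H r ω β Y) : EnhClosed H r ω β (X ∪ Y) := by
  constructor
  · rintro a (ha | ha) b hab
    · exact Or.inl (hX.1 a ha b hab)
    · exact Or.inr (hY.1 a ha b hab)
  · rintro u (hu | hu) hβ hfo v hd
    · exact Or.inl (hX.2 u hu hβ hfo v hd)
    · exact Or.inr (hY.2 u hu hβ hfo v hd)

lemma dist_le_one_of_adj {a b : V} (h : H.Adj a b) : H.dist a b ≤ 1 := by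
  have := SimpleGraph.dist_le (SimpleGraph.Walk.cons h SimpleGraph.Walk.nil)
  simpa using this

lemma exists_adj_closer (hconn : H.Connected) {x w : V} {k : ℕ}
    (h : H.dist x w = k + 1) : ∃ w', H.Adj w' w ∧ H.dist x w' = k := by
  obtain ⟨p, hp⟩ := hconn.exists_walk_length_eq_dist x w
  rw [h] at hp
  have hq : (p.reverse.length = k + 1) := by simpa using hp
  cases hq' : p.reverse with
  | nil =>
      rw [hq'] at hq; simp at hq
  | cons hadj q =>
      rename_i b
      rw [hq'] at hq
      simp [SimpleGraph.Walk.length_cons] at hq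
      refine ⟨b, hadj.symm, ?_⟩
      have h1 : H.dist x b ≤ k := by
        have := SimpleGraph.dist_le q.reverse
        simpa [hq] using this
      have h2 : k + 1 ≤ H.dist x b + 1 := by
        calc k + 1 = H.dist x w := h.symm
        _ ≤ H.dist x b + H.dist b w := hconn.dist_triangle
        _ ≤ H.dist x b + 1 := by
            have := dist_le_one_of_adj (H := H) hadj.symm
            omega
      omega

lemma ball_finite (hconn : H.Connected) (hlf : ∀ v : V, (H.neighborSet v).Finite)
    (x : V) (k : ℕ) : {y | H.dist x y ≤ k}.Finite := by
  induction k with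
  | zero =>
      refine Set.Finite.subset (Set.finite_singleton x) ?_
      intro y hy
      have : H.dist x y = 0 := Nat.le_zero.mp hy
      have : x = y := (hconn.dist_eq_zero_iff).mp this
      simp [this.symm]
  | succ k ih =>
      refine Set.Finite.subset (ih.union (Set.Finite.biUnion ih (fun v _ => hlf v))) ?_
      intro y hy
      rcases Nat.lt_or_ge (H.dist x y) (k+1) with h | h
      · exact Or.inl (show H.dist x y ≤ k from by omega)
      · have heq : H.dist x y = k + 1 := le_antisymm hy h
        obtain ⟨w', hadj, hw'⟩ := exists_adj_closer hconn heq
        exact Or.inr (Set.mem_biUnion (le_of_eq hw') hadj)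

lemma dist_getVert_le (hconn : H.Connected) {u v : V} (p : H.Walk u v) :
    ∀ i : ℕ, H.dist u (p.getVert i) ≤ i ∧ H.dist (p.getVert i) v ≤ p.length - i := by
  induction p with
  | nil =>
      intro i
      simp [SimpleGraph.Walk.getVert, SimpleGraph.dist_self]
  | cons hadj q ih =>
      rename_i a b c
      intro i
      cases i with
      | zero =>
          constructor
          · simp [SimpleGraph.dist_self]
          · have := SimpleGraph.dist_le (SimpleGraph.Walk.cons hadj q)
            simpa using this
      | succ i =>
          obtain ⟨ih1, ih2⟩ := ih i
          have hg : (SimpleGraph.Walk.cons hadj q).getVert (i+1) = q.getVert i := by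
            simp [SimpleGraph.Walk.getVert_cons_succ]
          have hlen : (SimpleGraph.Walk.cons hadj q).length = q.length + 1 := by simp
          rw [hg, hlen]
          constructor
          · have htri : H.dist a (q.getVert i) ≤ H.dist a b + H.dist b (q.getVert i) :=
              hconn.dist_triangle
            have hab := dist_le_one_of_adj hadj
            omega
          · omega

lemma flipE_same (ω : H.edgeSet → Bool) (e : H.edgeSet) (b : Bool) :
    flipE H ω e b e = b := by
  simp [flipE]

lemma flipE_ne (ω : H.edgeSet → Bool) (e f : H.edgeSet) (b : Bool) (h : f ≠ e) :
    flipE H ω e b f = ω f := by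
  classical
  simp [flipE, Function.update_of_ne h]

lemma flipV_same (α : V → Bool) (z : V) (b : Bool) : flipV α z b z = b := by
  simp [flipV]

lemma flipV_ne (α : V → Bool) (z v : V) (b : Bool) (h : v ≠ z) : flipV α z b v = α v := by
  classical
  simp [flipV, Function.update_of_ne h]

lemma flipV_self (α : V → Bool) (z : V) (h : α z = false) : flipV α z false = α := by
  funext v
  by_cases hv : v = z
  · subst hv; simp [flipV_same, h]
  · simp [flipV_ne _ _ _ _ hv]

lemma truncE_flipE (o : V) (L : ℕ) (ω : H.edgeSet → Bool) (e : H.edgeSet) (b : Bool)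
    (he : ∀ w ∈ (e : Sym2 V), H.dist o w ≤ L) :
    truncE H o L (flipE H ω e b) = flipE H (truncE H o L ω) e b := by
  funext f
  by_cases hf : f = e
  · subst hf
    simp [truncE, flipE_same, if_pos he]
  · simp [truncE, flipE_ne _ _ _ _ hf]

lemma truncE_flipE_outside (o : V) (L : ℕ) (ω : H.edgeSet → Bool) (e : H.edgeSet) (b : Bool)
    (he : ¬ ∀ w ∈ (e : Sym2 V), H.dist o w ≤ L) :
    truncE H o L (flipE H ω e b) = truncE H o L ω := by
  funext f
  by_cases hf : f = e
  · subst hf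
    simp [truncE, if_neg he]
  · simp [truncE, flipE_ne _ _ _ _ hf]

lemma truncV_flipV (o : V) (L : ℕ) (α : V → Bool) (z : V) (b : Bool)
    (hz : H.dist o z ≤ L) :
    truncV H o L (flipV α z b) = flipV (truncV H o L α) z b := by
  funext v
  by_cases hv : v = z
  · subst hv
    simp [truncV, flipV_same, if_pos hz]
  · simp [truncV, flipV_ne _ _ _ _ hv]

lemma truncE_le (o : V) (L : ℕ) (ω : H.edgeSet → Bool) (f : H.edgeSet)
    (h : truncE H o L ω f = true) : ω f = true ∧ ∀ w ∈ (f : Sym2 V), H.dist o w ≤ L := by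
  by_cases hc : ∀ w ∈ (f : Sym2 V), H.dist o w ≤ L
  · exact ⟨by simpa [truncE, if_pos hc] using h, hc⟩
  · simp [truncE, if_neg hc] at h

lemma truncV_le (o : V) (L : ℕ) (α : V → Bool) (v : V)
    (h : truncV H o L α v = true) : α v = true ∧ H.dist o v ≤ L := by
  by_cases hc : H.dist o v ≤ L
  · exact ⟨by simpa [truncV, if_pos hc] using h, hc⟩
  · simp [truncV, if_neg hc] at h

lemma truncE_eq_of_mem (o : V) (L : ℕ) (ω : H.edgeSet → Bool) (f : H.edgeSet)
    (hc : ∀ w ∈ (f : Sym2 V), H.dist o w ≤ L) : truncE H o L ω f = ω f := by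
  simp [truncE, if_pos hc]

lemma truncE_not_mem (o : V) (L : ℕ) (ω : H.edgeSet → Bool) (f : H.edgeSet)
    (hc : ¬ ∀ w ∈ (f : Sym2 V), H.dist o w ≤ L) : truncE H o L ω f = false := by
  simp [truncE, if_neg hc]

lemma truncV_eq_of_mem (o : V) (L : ℕ) (α : V → Bool) (v : V)
    (hc : H.dist o v ≤ L) : truncV H o L α v = α v := by
  simp [truncV, if_pos hc]

lemma enhCluster_mono {r : ℕ} {ω ω' : H.edgeSet → Bool} {β β' : V → Bool} {A A' : Set V}
    (hω : ∀ f, ω f = true → ω' f = true) (hβ : ∀ v, β v = true → β' v = true)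
    (hA : A ⊆ A') : enhCluster H r ω β A ⊆ enhCluster H r ω' β' A' := by
  refine enhCluster_subset_of_closed (hA.trans subset_enhCluster) ?_
  constructor
  · rintro a ha b ⟨hadj, hval⟩
    exact (enhClosed_enhCluster).1 a ha b ⟨hadj, hω _ hval⟩
  · intro u hu hβu hfo v hd
    exact (enhClosed_enhCluster).2 u hu (hβ _ hβu) (fun f hf => hω _ (hfo f hf)) v hd

lemma enhCluster_idem {r : ℕ} {ω : H.edgeSet → Bool} {β : V → Bool} {S A : Set V}
    (hS : S ⊆ enhCluster H r ω β A) :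
    enhCluster H r ω β S ⊆ enhCluster H r ω β A :=
  enhCluster_subset_of_closed hS enhClosed_enhCluster

lemma forall_mem_pair {p : V → Prop} {a b : V} :
    (∀ w ∈ (s(a, b) : Sym2 V), p w) ↔ p a ∧ p b := by
  constructor
  · intro h
    exact ⟨h a (Sym2.mem_mk_left a b), h b (Sym2.mem_mk_right a b)⟩
  · rintro ⟨ha, hb⟩ w hw
    rcases Sym2.mem_iff.mp hw with rfl | rfl
    · exact ha
    · exact hb

lemma openGraph_adj_iff {ω : H.edgeSet → Bool} {a b : V} (hadj : H.Adj a b)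
    (f : H.edgeSet) (hf : (f : Sym2 V) = s(a, b)) :
    (openGraph H ω).Adj a b ↔ ω f = true := by
  constructor
  · rintro ⟨h, hv⟩
    have : f = ⟨s(a, b), (SimpleGraph.mem_edgeSet H).mpr h⟩ := Subtype.ext hf
    rw [this]; exact hv
  · intro hv
    refine ⟨hadj, ?_⟩
    have : (⟨s(a, b), (SimpleGraph.mem_edgeSet H).mpr hadj⟩ : H.edgeSet) = f :=
      Subtype.ext hf.symm
    rw [this]; exact hv

end Aux


/-- **Lemma (from `p`-pivotality to `s`-pivotality, two-set version).**
With `R = 3r+1`: for any non-empty finite `A, B ⊆ V(H)` with `B` `r`-nice and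
`d(A,B) > 3r`, there is `L₀ = L₀(A,B)` such that for every `L ≥ L₀`, if an edge `e` is
`p`-pivotal for `E_L^{A,B}` in a configuration `c`, then there are a configuration `c'`
differing from `c` only inside `B_R(e)` and a vertex `z ∈ B_R(e)` which is `s`-pivotal
for `E_L^{A,B}` in `c'`. -/
theorem sPivotal_of_pPivotal_sets {V : Type*} (H : SimpleGraph V) (o : V)
    (hconn : H.Connected) (hlf : LocallyFinite' H)
    (r : ℕ) (hr : 1 ≤ r)
    (A B : Set V) (hA : A.Finite) (hAne : A.Nonempty) (hB : RNice H r B)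
    (hd : ∀ a ∈ A, ∀ b ∈ B, 3 * r < H.dist a b) :
    ∃ L0 : ℕ, ∀ L : ℕ, L0 ≤ L →
      ∀ (e : H.edgeSet) (c : (H.edgeSet → Bool) × (V → Bool)),
        PPivotal H
          {c' | (enhCluster H r (truncE H o L c'.1) (truncV H o L c'.2) A ∩ B).Nonempty}
          e c →
        ∃ (c' : (H.edgeSet → Bool) × (V → Bool)) (z : V),
          z ∈ edgeBall H e (3 * r + 1) ∧
          (∀ e' : H.edgeSet,
            ¬ (∀ w ∈ (e' : Sym2 V), w ∈ edgeBall H e (3 * r + 1)) → c'.1 e' = c.1 e') ∧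
          (∀ v : V, v ∉ edgeBall H e (3 * r + 1) → c'.2 v = c.2 v) ∧
          SPivotal H
            {c'' |
              (enhCluster H r (truncE H o L c''.1) (truncV H o L c''.2) A ∩ B).Nonempty}
            z c' := by
  classical
  obtain ⟨hBfin, hBne, hBnice⟩ := hB
  set DB := hBfin.toFinset.sup (H.dist o) with hDB
  refine ⟨DB + 4 * r + 2, ?_⟩
  intro L hL e c hpiv
  by_contra hcon
  push_neg at hcon
  set Ev : Set ((H.edgeSet → Bool) × (V → Bool)) :=
    {c' | (enhCluster H r (truncE H o L c'.1) (truncV H o L c'.2) A ∩ B).Nonempty} with hEv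
  have memEv : ∀ (ω : H.edgeSet → Bool) (β : V → Bool),
      ((ω, β) ∈ Ev) ↔
        (enhCluster H r (truncE H o L ω) (truncV H o L β) A ∩ B).Nonempty :=
    fun _ _ => Iff.rfl
  -- endpoints of `e`
  obtain ⟨x0, y0, hes0⟩ : ∃ x y : V, (e : Sym2 V) = s(x, y) := by
    obtain ⟨⟨x, y⟩, h⟩ := Quot.exists_rep (e : Sym2 V)
    exact ⟨x, y, h.symm⟩
  have hadj0 : H.Adj x0 y0 := by
    have h2 := e.2
    rw [show (e : Sym2 V) = s(x0, y0) from hes0] at h2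
    exact (SimpleGraph.mem_edgeSet H).mp h2
  have hmem_e : ∀ w, w ∈ (e : Sym2 V) ↔ w = x0 ∨ w = y0 := by
    intro w; rw [hes0]; exact Sym2.mem_iff
  have hBle : ∀ b ∈ B, H.dist o b ≤ DB := fun b hb =>
    Finset.le_sup (hBfin.mem_toFinset.mpr hb)
  have hx0ball : x0 ∈ edgeBall H e (3 * r + 1) :=
    ⟨x0, (hmem_e x0).mpr (Or.inl rfl), by simp [SimpleGraph.dist_self]⟩
  have hy0ball : y0 ∈ edgeBall H e (3 * r + 1) :=
    ⟨y0, (hmem_e y0).mpr (Or.inr rfl), by simp [SimpleGraph.dist_self]⟩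
  have hballfin : (edgeBall H e (3 * r + 1)).Finite := by
    refine Set.Finite.subset ((ball_finite hconn hlf x0 (3 * r + 1)).union
      (ball_finite hconn hlf y0 (3 * r + 1))) ?_
    rintro v ⟨w, hw, hwv⟩
    rcases (hmem_e w).mp hw with rfl | rfl
    · exact Or.inl hwv
    · exact Or.inr hwv
  -- monotonicity of the event
  have EvMono : ∀ (ω₁ ω₂ : H.edgeSet → Bool) (β₁ β₂ : V → Bool),
      (∀ f, ω₁ f = true → ω₂ f = true) → (∀ v, β₁ v = true → β₂ v = true) →
      (ω₁, β₁) ∈ Ev → (ω₂, β₂) ∈ Ev := by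
    intro ω₁ ω₂ β₁ β₂ hω hβ hmem
    obtain ⟨bb, hb⟩ := (memEv _ _).mp hmem
    refine (memEv _ _).mpr ⟨bb, ?_, hb.2⟩
    refine enhCluster_mono ?_ ?_ subset_rfl hb.1
    · intro f hf
      obtain ⟨h1, h2⟩ := truncE_le o L ω₁ f hf
      rw [truncE_eq_of_mem o L ω₂ f h2]; exact hω f h1
    · intro v hv
      obtain ⟨h1, h2⟩ := truncV_le o L β₁ v hv
      rw [truncV_eq_of_mem o L β₂ v h2]; exact hβ v h1
  -- single-vertex lowering step, from the contradiction hypothesis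
  have step : ∀ (ω₀ : H.edgeSet → Bool) (β : V → Bool) (a : V),
      a ∈ edgeBall H e (3 * r + 1) →
      (∀ e' : H.edgeSet, ¬(∀ w ∈ (e' : Sym2 V), w ∈ edgeBall H e (3 * r + 1)) →
        ω₀ e' = c.1 e') →
      (∀ v, v ∉ edgeBall H e (3 * r + 1) → β v = c.2 v) →
      (ω₀, flipV β a true) ∈ Ev → (ω₀, flipV β a false) ∈ Ev := by
    intro ω₀ β a ha hω hβ htrue
    by_contra hfalse
    refine hcon (ω₀, β) a ha ?_ hβ ⟨htrue, hfalse⟩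
    intro e' hex
    obtain ⟨w, hw1, hw2⟩ := hex
    exact hω e' (fun h2 => hw2 (h2 w hw1))
  -- the lowered vertex configuration
  set αh : V → Bool := fun v => if v ∈ edgeBall H e (3 * r + 1) then false else c.2 v
    with hαh
  have hαh_out : ∀ v, v ∉ edgeBall H e (3 * r + 1) → αh v = c.2 v := by
    intro v hv; simp only [hαh]; rw [if_neg hv]
  have hαh_in : ∀ v, v ∈ edgeBall H e (3 * r + 1) → αh v = false := by
    intro v hv; simp only [hαh]; rw [if_pos hv]
  have lower : ∀ ω₀ : H.edgeSet → Bool,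
      (∀ e' : H.edgeSet, ¬(∀ w ∈ (e' : Sym2 V), w ∈ edgeBall H e (3 * r + 1)) →
        ω₀ e' = c.1 e') →
      (((ω₀, αh) ∈ Ev) ↔ ((ω₀, c.2) ∈ Ev)) := by
    intro ω₀ hω₀
    have key : ∀ s : Finset V, (↑s ⊆ edgeBall H e (3 * r + 1)) →
        (((ω₀, fun v => if v ∈ s then false else c.2 v) ∈ Ev) ↔ ((ω₀, c.2) ∈ Ev)) := by
      intro s
      induction s using Finset.induction_on with
      | empty => intro _; simp
      | insert a s hnot ih =>
          intro hsub
          have hsub' : (↑s : Set V) ⊆ edgeBall H e (3 * r + 1) := by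
            intro v hv; exact hsub (Finset.mem_insert_of_mem hv)
          have haball : a ∈ edgeBall H e (3 * r + 1) := hsub (Finset.mem_insert_self a s)
          have hβagree : ∀ v, v ∉ edgeBall H e (3 * r + 1) →
              (fun v => if v ∈ s then false else c.2 v) v = c.2 v := by
            intro v hv
            have hvs : v ∉ s := fun hvs => hv (hsub' hvs)
            simp [hvs]
          have heqf : (fun v => if v ∈ insert a s then false else c.2 v)
              = flipV (fun v => if v ∈ s then false else c.2 v) a false := by
            funext v
            by_cases hv : v = a
            · subst hv; simp [flipV_same]
            · rw [flipV_ne _ _ _ _ hv]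
              simp [Finset.mem_insert, hv]
          rw [heqf]
          constructor
          · intro h
            refine (ih hsub').mp (EvMono _ _ _ _ (fun f hf => hf) ?_ h)
            intro v hv
            by_cases hva : v = a
            · subst hva; rw [flipV_same] at hv; exact absurd hv (by simp)
            · rwa [flipV_ne _ _ _ _ hva] at hv
          · intro h
            have h1 : (ω₀, fun v => if v ∈ s then false else c.2 v) ∈ Ev := (ih hsub').mpr h
            have h2 : (ω₀, flipV (fun v => if v ∈ s then false else c.2 v) a true) ∈ Ev := by
              refine EvMono _ _ _ _ (fun f hf => hf) ?_ h1
              intro v hv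
              by_cases hva : v = a
              · subst hva; rw [flipV_same]
              · rwa [flipV_ne _ _ _ _ hva]
            exact step ω₀ _ a haball hω₀ hβagree h2
    have hfuneq : (fun v => if v ∈ hballfin.toFinset then false else c.2 v) = αh := by
      funext v
      simp only [hαh]
      by_cases hv : v ∈ edgeBall H e (3 * r + 1)
      · rw [if_pos hv, if_pos (hballfin.mem_toFinset.mpr hv)]
      · rw [if_neg hv, if_neg (fun h => hv (hballfin.mem_toFinset.mp h))]
    have := key hballfin.toFinset (fun v hv => hballfin.mem_toFinset.mp hv)
    rwa [hfuneq] at this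
  have hflip_agree : ∀ b : Bool, ∀ e' : H.edgeSet,
      ¬(∀ w ∈ (e' : Sym2 V), w ∈ edgeBall H e (3 * r + 1)) →
      flipE H c.1 e b e' = c.1 e' := by
    intro b e' he'
    have hne : e' ≠ e := by
      intro h; subst h; apply he'; intro w hw
      rcases (hmem_e w).mp hw with rfl | rfl
      · exact hx0ball
      · exact hy0ball
    exact flipE_ne _ _ _ _ hne
  -- both endpoints of `e` lie in the truncation ball
  have hinside : ∀ w ∈ (e : Sym2 V), H.dist o w ≤ L := by
    by_contra hout
    have h1 := truncE_flipE_outside o L c.1 e true hout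
    have h2 := truncE_flipE_outside o L c.1 e false hout
    have ht := (memEv _ _).mp hpiv.1
    rw [h1, ← h2] at ht
    exact hpiv.2 ((memEv _ _).mpr ht)
  have hx0L : H.dist o x0 ≤ L := hinside x0 ((hmem_e x0).mpr (Or.inl rfl))
  have hy0L : H.dist o y0 ≤ L := hinside y0 ((hmem_e y0).mpr (Or.inr rfl))
  -- the two truncated edge configurations
  set ωp := flipE H (truncE H o L c.1) e true with hωp
  set ωm := flipE H (truncE H o L c.1) e false with hωm
  set βh := truncV H o L αh with hβh
  have hEvT : ∀ bl : Bool, ((flipE H c.1 e bl, αh) ∈ Ev) ↔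
      (enhCluster H r (flipE H (truncE H o L c.1) e bl) βh A ∩ B).Nonempty := by
    intro bl
    rw [memEv, truncE_flipE o L c.1 e bl hinside, hβh]
  have hptrue : (enhCluster H r ωp βh A ∩ B).Nonempty := by
    rw [hωp]
    exact (hEvT true).mp ((lower (flipE H c.1 e true) (hflip_agree true)).mpr hpiv.1)
  have hKempty : enhCluster H r ωm βh A ∩ B = ∅ := by
    rw [← Set.not_nonempty_iff_eq_empty]
    intro h
    rw [hωm] at h
    exact hpiv.2 ((lower (flipE H c.1 e false) (hflip_agree false)).mp ((hEvT false).mpr h))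
  set K := enhCluster H r ωm βh A with hKdef
  have hβh_notball : ∀ u, βh u = true →
      u ∉ edgeBall H e (3 * r + 1) ∧ H.dist o u ≤ L := by
    intro u hu
    obtain ⟨h1, h2⟩ := truncV_le o L αh u hu
    refine ⟨?_, h2⟩
    intro hball
    rw [hαh_in u hball] at h1; exact absurd h1 (by simp)
  have hωm_e : ωm e = false := flipE_same _ _ _
  have hωpm : ∀ f, f ≠ e → ωp f = ωm f := by
    intro f hf; rw [hωp, hωm, flipE_ne _ _ _ _ hf, flipE_ne _ _ _ _ hf]
  have hωm_ne : ∀ f : H.edgeSet, ωm f = true → f ≠ e := by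
    intro f hval h
    rw [h, hωm_e] at hval; exact absurd hval (by simp)
  have hωm_c : ∀ f : H.edgeSet, ωm f = true →
      c.1 f = true ∧ ∀ w ∈ (f : Sym2 V), H.dist o w ≤ L := by
    intro f hval
    have hne := hωm_ne f hval
    rw [hωm, flipE_ne _ _ _ _ hne] at hval
    exact truncE_le o L c.1 f hval
  have hball_dist : ∀ u, u ∉ edgeBall H e (3 * r + 1) →
      ∀ w ∈ (e : Sym2 V), 3 * r + 1 < H.dist w u := by
    intro u hu w hw
    by_contra h; push_neg at h; exact hu ⟨w, hw, h⟩
  have hFOpm : ∀ u, u ∉ edgeBall H e (3 * r + 1) →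
      (fullyOpen H r ωp u ↔ fullyOpen H r ωm u) := by
    intro u hu
    have he_not : ¬(∀ w ∈ (e : Sym2 V), H.dist u w ≤ r) := by
      intro hcond
      have h1 := hball_dist u hu x0 ((hmem_e x0).mpr (Or.inl rfl))
      have h2 := hcond x0 ((hmem_e x0).mpr (Or.inl rfl))
      rw [SimpleGraph.dist_comm] at h2
      omega
    constructor <;> intro hfo f hf
    · have hne : f ≠ e := fun h => he_not (h ▸ hf)
      rw [← hωpm f hne]; exact hfo f hf
    · have hne : f ≠ e := fun h => he_not (h ▸ hf)
      rw [hωpm f hne]; exact hfo f hf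
  -- splitting off the two endpoints
  have hsplit : enhCluster H r ωp βh A ⊆ K ∪ enhCluster H r ωm βh {x0, y0} := by
    refine enhCluster_subset_of_closed (fun a ha => Or.inl (subset_enhCluster ha)) ?_
    constructor
    · rintro a ha b ⟨hadj, hval⟩
      by_cases hfe : (⟨s(a, b), (SimpleGraph.mem_edgeSet H).mpr hadj⟩ : H.edgeSet) = e
      · have hsab : s(a, b) = s(x0, y0) := by
          rw [← hes0]; exact congrArg Subtype.val hfe
        have hb : b = x0 ∨ b = y0 := by
          rcases Sym2.eq_iff.mp hsab with ⟨h1, h2⟩ | ⟨h1, h2⟩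
          · exact Or.inr h2
          · exact Or.inl h2
        refine Or.inr (subset_enhCluster ?_)
        rcases hb with rfl | rfl
        · exact Set.mem_insert _ _
        · exact Set.mem_insert_of_mem _ rfl
      · have hval' : ωm ⟨s(a, b), (SimpleGraph.mem_edgeSet H).mpr hadj⟩ = true := by
          rw [← hωpm _ hfe]; exact hval
        rcases ha with ha | ha
        · exact Or.inl ((enhClosed_enhCluster).1 a ha b ⟨hadj, hval'⟩)
        · exact Or.inr ((enhClosed_enhCluster).1 a ha b ⟨hadj, hval'⟩)
    · intro u hu hβu hfo v hd
      have hfo' := (hFOpm u (hβh_notball u hβu).1).mp hfo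
      rcases hu with hu | hu
      · exact Or.inl ((enhClosed_enhCluster).2 u hu hβu hfo' v hd)
      · exact Or.inr ((enhClosed_enhCluster).2 u hu hβu hfo' v hd)
  obtain ⟨bb, hbbcl, hbbB⟩ := hptrue
  have hbbK : bb ∉ K := fun h =>
    Set.eq_empty_iff_forall_notMem.mp hKempty bb ⟨h, hbbB⟩
  have hbbN : bb ∈ enhCluster H r ωm βh {x0, y0} := (hsplit hbbcl).resolve_left hbbK
  have hNsplit : enhCluster H r ωm βh {x0, y0} ⊆
      enhCluster H r ωm βh {x0} ∪ enhCluster H r ωm βh {y0} := by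
    refine enhCluster_subset_of_closed ?_
      (enhClosed_union enhClosed_enhCluster enhClosed_enhCluster)
    rintro v (rfl | rfl)
    · exact Or.inl (subset_enhCluster rfl)
    · exact Or.inr (subset_enhCluster rfl)
  -- the main argument, symmetric in the two endpoints of e
  have main : ∀ xh yh : V, H.Adj xh yh → (e : Sym2 V) = s(xh, yh) →
      bb ∈ enhCluster H r ωm βh {yh} → False := by
    intro xh yh hadjxy hes hbbY
    have hmem' : ∀ w, w ∈ (e : Sym2 V) ↔ w = xh ∨ w = yh := by
      intro w; rw [hes]; exact Sym2.mem_iff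
    have hxhe : xh ∈ (e : Sym2 V) := (hmem' xh).mpr (Or.inl rfl)
    have hyhe : yh ∈ (e : Sym2 V) := (hmem' yh).mpr (Or.inr rfl)
    have hxhL : H.dist o xh ≤ L := hinside xh hxhe
    have hKB : ∀ v, v ∈ K → v ∉ B := fun v hv hvB =>
      Set.eq_empty_iff_forall_notMem.mp hKempty v ⟨hv, hvB⟩
    have hyhK : yh ∉ K := by
      intro h
      have hsub : enhCluster H r ωm βh {yh} ⊆ K :=
        enhCluster_idem (by rintro v rfl; exact h)
      exact hKB bb (hsub hbbY) hbbB
    have hxhK : xh ∈ K := by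
      by_contra hxh
      have habs : enhCluster H r ωp βh A ⊆ K := by
        refine enhCluster_subset_of_closed subset_enhCluster ?_
        constructor
        · rintro a ha b ⟨hadj, hval⟩
          by_cases hfe : (⟨s(a, b), (SimpleGraph.mem_edgeSet H).mpr hadj⟩ : H.edgeSet) = e
          · exfalso
            have hsab : s(a, b) = s(xh, yh) := by
              rw [← hes]; exact congrArg Subtype.val hfe
            rcases Sym2.eq_iff.mp hsab with ⟨h1, h2⟩ | ⟨h1, h2⟩
            · exact hxh (h1 ▸ ha)
            · exact hyhK (h1 ▸ ha)
          · exact (enhClosed_enhCluster).1 a ha b ⟨hadj, by rw [← hωpm _ hfe]; exact hval⟩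
        · intro u hu hβu hfo v hdv
          exact (enhClosed_enhCluster).2 u hu hβu
            ((hFOpm u (hβh_notball u hβu).1).mp hfo) v hdv
      exact hKB bb (habs hbbcl) hbbB
    have hxhB : xh ∉ B := hKB xh hxhK
    -- choice of the centre z of the gadget ball
    obtain ⟨z, hzx, hIL, hIB⟩ : ∃ z : V, H.dist z xh ≤ r ∧
        (∀ w, H.dist z w ≤ r → H.dist o w ≤ L) ∧ (∀ w, H.dist z w ≤ r → w ∉ B) := by
      by_cases hdeep : H.dist o xh + 2 * r ≤ L
      · obtain ⟨ζ, hζ1, hζ2⟩ := hBnice xh hxhB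
        have hζx : H.dist ζ xh ≤ r := hζ1
        refine ⟨ζ, hζx, ?_, ?_⟩
        · intro w hw
          have t1 : H.dist o w ≤ H.dist o xh + H.dist xh w := hconn.dist_triangle
          have t2 : H.dist xh w ≤ H.dist xh ζ + H.dist ζ w := hconn.dist_triangle
          have t3 : H.dist xh ζ = H.dist ζ xh := SimpleGraph.dist_comm
          omega
        · intro w hw
          exact hζ2 w hw
      · push_neg at hdeep
        have hrm : r ≤ H.dist o xh := by omega
        obtain ⟨p, hp⟩ := hconn.exists_walk_length_eq_dist o xh
        obtain ⟨hd1, hd2⟩ := dist_getVert_le hconn p (H.dist o xh - r)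
        rw [hp] at hd2
        refine ⟨p.getVert (H.dist o xh - r), by omega, ?_, ?_⟩
        · intro w hw
          have t1 : H.dist o w ≤ H.dist o (p.getVert (H.dist o xh - r)) +
            H.dist (p.getVert (H.dist o xh - r)) w := hconn.dist_triangle
          omega
        · intro w hw hwB
          have hble := hBle w hwB
          have t1 : H.dist o xh ≤ H.dist o w + H.dist w xh := hconn.dist_triangle
          have t2 : H.dist w xh ≤ H.dist w (p.getVert (H.dist o xh - r)) +
            H.dist (p.getVert (H.dist o xh - r)) xh := hconn.dist_triangle
          have t3 : H.dist w (p.getVert (H.dist o xh - r)) =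
            H.dist (p.getVert (H.dist o xh - r)) w := SimpleGraph.dist_comm
          omega
    have hxz : H.dist xh z ≤ r := by
      rw [SimpleGraph.dist_comm]; exact hzx
    have hzL : H.dist o z ≤ L := hIL z (by rw [SimpleGraph.dist_self]; omega)
    have hzball : z ∈ edgeBall H e (3 * r + 1) := ⟨xh, hxhe, by omega⟩
    have hI_ball : ∀ w, H.dist z w ≤ r + 1 → w ∈ edgeBall H e (3 * r + 1) := by
      intro w hw
      refine ⟨xh, hxhe, ?_⟩
      have t1 : H.dist xh w ≤ H.dist xh z + H.dist z w := hconn.dist_triangle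
      omega
    have hfar : ∀ u, u ∉ edgeBall H e (3 * r + 1) → 2 * r + 2 ≤ H.dist z u := by
      intro u hu
      have h1 := hball_dist u hu xh hxhe
      have h2 : H.dist xh u ≤ H.dist xh z + H.dist z u := hconn.dist_triangle
      omega
    have hzyh : H.dist z yh ≤ r + 1 := by
      have t1 : H.dist z yh ≤ H.dist z xh + H.dist xh yh := hconn.dist_triangle
      have t2 := dist_le_one_of_adj hadjxy
      omega
    -- the gadget configuration
    set ωg : H.edgeSet → Bool := fun f =>
      if ∀ w ∈ (f : Sym2 V), H.dist z w ≤ r then true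
      else if (∃ w ∈ (f : Sym2 V), H.dist z w ≤ r) ∧
          (∃ w ∈ (f : Sym2 V), ¬ H.dist z w ≤ r ∧ w ∉ K) then false
      else c.1 f with hωg
    have hωg_int : ∀ f : H.edgeSet, (∀ w ∈ (f : Sym2 V), H.dist z w ≤ r) →
        ωg f = true := by
      intro f h; simp only [hωg]; rw [if_pos h]
    have hωg_cut : ∀ f : H.edgeSet, (∃ w ∈ (f : Sym2 V), H.dist z w ≤ r) →
        (∃ w ∈ (f : Sym2 V), ¬ H.dist z w ≤ r ∧ w ∉ K) → ωg f = false := by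
      intro f h1 h2
      have hni : ¬ ∀ w ∈ (f : Sym2 V), H.dist z w ≤ r := by
        obtain ⟨w, hw, hw2⟩ := h2
        exact fun hall => hw2.1 (hall w hw)
      simp only [hωg]; rw [if_neg hni, if_pos ⟨h1, h2⟩]
    have hedge_rep : ∀ f : H.edgeSet, ∃ a b', H.Adj a b' ∧ (f : Sym2 V) = s(a, b') := by
      intro f
      obtain ⟨⟨a, b'⟩, h⟩ := Quot.exists_rep (f : Sym2 V)
      refine ⟨a, b', ?_, h.symm⟩
      have h2 := f.2
      rw [show (f : Sym2 V) = s(a, b') from h.symm] at h2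
      exact (SimpleGraph.mem_edgeSet H).mp h2
    have hωg_def : ∀ f : H.edgeSet, (∃ w ∈ (f : Sym2 V), ¬ H.dist z w ≤ r + 1) →
        ωg f = c.1 f := by
      rintro f ⟨w, hwf, hwd⟩
      obtain ⟨a, b', hadjf, hab⟩ := hedge_rep f
      have hnint : ¬ ∀ w ∈ (f : Sym2 V), H.dist z w ≤ r :=
        fun hall => hwd (le_trans (hall w hwf) (by omega))
      have hd1 : H.dist z b' ≤ H.dist z a + 1 := by
        have t1 : H.dist z b' ≤ H.dist z a + H.dist a b' := hconn.dist_triangle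
        have t2 := dist_le_one_of_adj hadjf
        omega
      have hd2 : H.dist z a ≤ H.dist z b' + 1 := by
        have t1 : H.dist z a ≤ H.dist z b' + H.dist b' a := hconn.dist_triangle
        have t2 := dist_le_one_of_adj hadjf.symm
        omega
      have hncut : ¬ ((∃ w ∈ (f : Sym2 V), H.dist z w ≤ r) ∧
          (∃ w ∈ (f : Sym2 V), ¬ H.dist z w ≤ r ∧ w ∉ K)) := by
        rintro ⟨⟨w1, hw1f, hw1⟩, -⟩
        rw [hab] at hwf hw1f
        rcases Sym2.mem_iff.mp hwf with rfl | rfl <;>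
          rcases Sym2.mem_iff.mp hw1f with rfl | rfl <;> omega
      simp only [hωg]; rw [if_neg hnint, if_neg hncut]
    have hωg_K : ∀ (f : H.edgeSet) (a b' : V), (f : Sym2 V) = s(a, b') →
        a ∈ K → b' ∈ K → ωg f = true ∨ ωg f = c.1 f := by
      intro f a b' hab haK hbK
      by_cases hint : ∀ w ∈ (f : Sym2 V), H.dist z w ≤ r
      · exact Or.inl (hωg_int f hint)
      · right
        have hncut : ¬ ((∃ w ∈ (f : Sym2 V), H.dist z w ≤ r) ∧
            (∃ w ∈ (f : Sym2 V), ¬ H.dist z w ≤ r ∧ w ∉ K)) := by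
          rintro ⟨-, ⟨w, hwf, -, hwK⟩⟩
          rw [hab] at hwf
          rcases Sym2.mem_iff.mp hwf with rfl | rfl
          · exact hwK haK
          · exact hwK hbK
        simp only [hωg]; rw [if_neg hint, if_neg hncut]
    set Tg := truncE H o L ωg with hTg
    have hTg_int : ∀ f : H.edgeSet, (∀ w ∈ (f : Sym2 V), H.dist z w ≤ r) →
        Tg f = true := by
      intro f h
      rw [hTg, truncE_eq_of_mem o L ωg f (fun w hw => hIL w (h w hw))]
      exact hωg_int f h
    have hTgm : ∀ u, u ∉ edgeBall H e (3 * r + 1) →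
        ∀ f : H.edgeSet, (∀ w ∈ (f : Sym2 V), H.dist u w ≤ r) → Tg f = ωm f := by
      intro u hu f hf
      have hufar := hfar u hu
      have hwfar : ∀ w ∈ (f : Sym2 V), ¬ H.dist z w ≤ r + 1 := by
        intro w hw
        have h1 := hf w hw
        have h2 : H.dist z u ≤ H.dist z w + H.dist w u := hconn.dist_triangle
        have h3 : H.dist w u = H.dist u w := SimpleGraph.dist_comm
        omega
      have hfc : ωg f = c.1 f := by
        obtain ⟨a, b', hadjf, hab⟩ := hedge_rep f
        refine hωg_def f ⟨a, ?_, ?_⟩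
        · rw [hab]; exact Sym2.mem_mk_left a b'
        · exact hwfar a (by rw [hab]; exact Sym2.mem_mk_left a b')
      have hfne : f ≠ e := by
        intro hfeq
        exact hwfar xh (by rw [hfeq]; exact hxhe) (by omega)
      by_cases hfL : ∀ w ∈ (f : Sym2 V), H.dist o w ≤ L
      · rw [hTg, truncE_eq_of_mem o L ωg f hfL, hfc, hωm, flipE_ne _ _ _ _ hfne,
          truncE_eq_of_mem o L c.1 f hfL]
      · rw [hTg, truncE_not_mem o L ωg f hfL, hωm, flipE_ne _ _ _ _ hfne,
          truncE_not_mem o L c.1 f hfL]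
    -- the false direction: without the enhancement at z nothing new is reached
    have hFalse : enhCluster H r Tg βh A ⊆ K ∪ {w | H.dist z w ≤ r} := by
      refine enhCluster_subset_of_closed (fun a ha => Or.inl (subset_enhCluster ha)) ?_
      constructor
      · rintro a ha b ⟨hadj, hval⟩
        set f : H.edgeSet := ⟨s(a, b), (SimpleGraph.mem_edgeSet H).mpr hadj⟩ with hfdef
        have hfs : (f : Sym2 V) = s(a, b) := rfl
        have hfm : ∀ w, w ∈ (f : Sym2 V) ↔ w = a ∨ w = b := by
          intro w; rw [hfs]; exact Sym2.mem_iff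
        obtain ⟨hvg, hfL⟩ := truncE_le o L ωg f hval
        by_cases hbI : H.dist z b ≤ r
        · exact Or.inr hbI
        · have hfne : f ≠ e := by
            intro hfeq
            have hyhI : ¬ H.dist z yh ≤ r := by
              intro hyI
              have hbxy : b = xh ∨ b = yh := by
                have hfs2 : (f : Sym2 V) = s(xh, yh) := by rw [hfeq]; exact hes
                have hbm : b ∈ (f : Sym2 V) := (hfm b).mpr (Or.inr rfl)
                rw [hfs2] at hbm
                exact Sym2.mem_iff.mp hbm
              rcases hbxy with rfl | rfl
              · exact hbI hzx
              · exact hbI hyI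
            have hcut : ωg f = false := by
              refine hωg_cut f ⟨xh, ?_, hzx⟩ ⟨yh, ?_, hyhI, hyhK⟩
              · rw [hfeq]; exact hxhe
              · rw [hfeq]; exact hyhe
            rw [hcut] at hvg; exact absurd hvg (by simp)
          have hnint : ¬ ∀ w ∈ (f : Sym2 V), H.dist z w ≤ r :=
            fun hall => hbI (hall b ((hfm b).mpr (Or.inr rfl)))
          have hncut : ¬ ((∃ w ∈ (f : Sym2 V), H.dist z w ≤ r) ∧
              (∃ w ∈ (f : Sym2 V), ¬ H.dist z w ≤ r ∧ w ∉ K)) := by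
            intro hcut
            rw [hωg_cut f hcut.1 hcut.2] at hvg
            exact absurd hvg (by simp)
          have hfc : ωg f = c.1 f := by
            simp only [hωg]; rw [if_neg hnint, if_neg hncut]
          have hωmf : ωm f = true := by
            rw [hωm, flipE_ne _ _ _ _ hfne, truncE_eq_of_mem o L c.1 f hfL, ← hfc]
            exact hvg
          have hbK : b ∈ K := by
            rcases ha with haK | haI
            · exact (enhClosed_enhCluster).1 a haK b ⟨hadj, hωmf⟩
            · by_contra hbK
              exact hncut ⟨⟨a, (hfm a).mpr (Or.inl rfl), haI⟩,
                ⟨b, (hfm b).mpr (Or.inr rfl), hbI, hbK⟩⟩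
          exact Or.inl hbK
      · intro u hu hβu hfo v hdv
        have hnb := (hβh_notball u hβu).1
        have hfo' : fullyOpen H r ωm u := by
          intro f hf
          rw [← hTgm u hnb f hf]
          exact hfo f hf
        rcases hu with huK | huI
        · exact Or.inl ((enhClosed_enhCluster).2 u huK hβu hfo' v hdv)
        · have huI' : H.dist z u ≤ r := huI
          exact absurd (hI_ball u (by omega)) hnb
    have hNoFalse : ¬ (enhCluster H r Tg βh A ∩ B).Nonempty := by
      rintro ⟨v, hv1, hv2⟩
      rcases hFalse hv1 with hvK | hvI
      · exact hKB v hvK hv2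
      · exact hIB v hvI hv2
    -- the true direction
    set βT := truncV H o L (flipV αh z true) with hβT
    have hβT_z : βT z = true := by
      rw [hβT, truncV_eq_of_mem o L _ z hzL]
      exact flipV_same _ _ _
    have hβT_mono : ∀ u, βh u = true → βT u = true := by
      intro u hu
      by_cases huz : u = z
      · subst huz; exact hβT_z
      · obtain ⟨h1, h2⟩ := truncV_le o L αh u hu
        rw [hβT, truncV_eq_of_mem o L _ u h2, flipV_ne _ _ _ _ huz]
        exact h1
    set clT := enhCluster H r Tg βT A with hclT
    have hKclT : K ⊆ clT := by
      have hsub : K ⊆ clT ∩ K := by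
        refine enhCluster_subset_of_closed
          (fun a ha => ⟨subset_enhCluster ha, subset_enhCluster ha⟩) ?_
        constructor
        · rintro a ⟨haT, haK⟩ b ⟨hadj, hval⟩
          set f : H.edgeSet := ⟨s(a, b), (SimpleGraph.mem_edgeSet H).mpr hadj⟩ with hfdef
          have hfs : (f : Sym2 V) = s(a, b) := rfl
          have hbK : b ∈ K := (enhClosed_enhCluster).1 a haK b ⟨hadj, hval⟩
          obtain ⟨hc1, hfL⟩ := hωm_c f hval
          have hTgf : Tg f = true := by
            rcases hωg_K f a b hfs haK hbK with h | h
            · rw [hTg, truncE_eq_of_mem o L ωg f hfL]; exact h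
            · rw [hTg, truncE_eq_of_mem o L ωg f hfL, h]; exact hc1
          exact ⟨(enhClosed_enhCluster).1 a haT b ⟨hadj, hTgf⟩, hbK⟩
        · rintro u ⟨huT, huK⟩ hβu hfo v hdv
          have hnb := (hβh_notball u hβu).1
          have hfoT : fullyOpen H r Tg u := by
            intro f hf
            rw [hTgm u hnb f hf]
            exact hfo f hf
          exact ⟨(enhClosed_enhCluster).2 u huT (hβT_mono u hβu) hfoT v hdv,
            (enhClosed_enhCluster).2 u huK hβu hfo v hdv⟩
      exact fun a ha => (hsub ha).1
    have hreach : ∀ k : ℕ, ∀ w, H.dist z w = k → k ≤ r →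
        (openGraph H Tg).Reachable z w := by
      intro k
      induction k with
      | zero =>
          intro w hw _
          have hzw : z = w := (hconn.dist_eq_zero_iff).mp hw
          subst hzw
          exact SimpleGraph.Reachable.refl z
      | succ k ih =>
          intro w hw hk
          obtain ⟨w', hadj', hw'⟩ := exists_adj_closer hconn hw
          have hstep : (openGraph H Tg).Adj w' w := by
            refine ⟨hadj', ?_⟩
            refine hTg_int _ ?_
            intro ww hww
            rcases Sym2.mem_iff.mp hww with rfl | rfl
            · omega
            · omega
          exact ((ih w' hw' (by omega)).trans hstep.reachable)
    have hzclT : z ∈ clT := by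
      have hxcl : xh ∈ clT := hKclT hxhK
      have hr1 : (openGraph H Tg).Reachable z xh := hreach (H.dist z xh) xh rfl hzx
      exact mem_of_reachable (enhClosed_enhCluster).1 hxcl hr1.symm
    have hfoz : fullyOpen H r Tg z := fun f hf => hTg_int f hf
    have hjump : ∀ v, H.dist z v = r + 1 → v ∈ clT :=
      fun v hv => (enhClosed_enhCluster).2 z hzclT hβT_z hfoz v hv
    -- the suffix of the yh-side exploration survives in the gadget configuration
    set Yh := enhCluster H r ωm βh {yh} with hYhdef
    set Sd := {v | H.dist z v = r + 1 ∧ v ∈ Yh} with hSd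
    set Tset := enhCluster H r Tg βh Sd with hTset
    have hsuf : Yh ⊆ ({w | H.dist z w ≤ r + 1} ∪ Tset) ∩ Yh := by
      refine enhCluster_subset_of_closed ?_ ?_
      · rintro v rfl
        exact ⟨Or.inl hzyh, subset_enhCluster rfl⟩
      constructor
      · rintro a ⟨haPT, haY⟩ b ⟨hadj, hval⟩
        have hbY : b ∈ Yh := (enhClosed_enhCluster).1 a haY b ⟨hadj, hval⟩
        by_cases hbP : H.dist z b ≤ r + 1
        · exact ⟨Or.inl hbP, hbY⟩
        · set f : H.edgeSet := ⟨s(a, b), (SimpleGraph.mem_edgeSet H).mpr hadj⟩ with hfdef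
          have hfs : (f : Sym2 V) = s(a, b) := rfl
          have haI : ¬ H.dist z a ≤ r := by
            intro hza
            have t1 : H.dist z b ≤ H.dist z a + H.dist a b := hconn.dist_triangle
            have t2 := dist_le_one_of_adj hadj
            omega
          have haT : a ∈ Tset := by
            rcases haPT with haP | haT
            · have haP' : H.dist z a ≤ r + 1 := haP
              exact subset_enhCluster ⟨by omega, haY⟩
            · exact haT
          obtain ⟨hc1, hfL⟩ := hωm_c f hval
          have hfc : ωg f = c.1 f := by
            refine hωg_def f ⟨b, ?_, hbP⟩
            rw [hfs]; exact Sym2.mem_mk_right a b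
          have hTgf : Tg f = true := by
            rw [hTg, truncE_eq_of_mem o L ωg f hfL, hfc]; exact hc1
          exact ⟨Or.inr ((enhClosed_enhCluster).1 a haT b ⟨hadj, hTgf⟩), hbY⟩
      · rintro u ⟨huPT, huY⟩ hβu hfo v hdv
        have hnb := (hβh_notball u hβu).1
        have hvY : v ∈ Yh := (enhClosed_enhCluster).2 u huY hβu hfo v hdv
        have huT : u ∈ Tset := by
          rcases huPT with huP | huT
          · exact absurd (hI_ball u huP) hnb
          · exact huT
        have hfoT : fullyOpen H r Tg u := by
          intro f hf; rw [hTgm u hnb f hf]; exact hfo f hf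
        exact ⟨Or.inr ((enhClosed_enhCluster).2 u huT hβu hfoT v hdv), hvY⟩
    have hbbT : bb ∈ Tset := by
      rcases (hsuf hbbY).1 with hbbP | hbbT
      · have hnI : ¬ H.dist z bb ≤ r := fun h => hIB bb h hbbB
        have hbbP' : H.dist z bb ≤ r + 1 := hbbP
        exact subset_enhCluster ⟨by omega, hbbY⟩
      · exact hbbT
    have hTsetclT : Tset ⊆ clT := by
      refine enhCluster_subset_of_closed (fun v hv => hjump v hv.1) ?_
      constructor
      · exact (enhClosed_enhCluster).1
      · intro u hu hβu hfo v hdv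
        exact (enhClosed_enhCluster).2 u hu (hβT_mono u hβu) hfo v hdv
    have hbbclT : bb ∈ clT := hTsetclT hbbT
    -- assembling the s-pivotal pair, contradicting hcon
    have hTrue : (ωg, flipV αh z true) ∈ Ev := by
      refine (memEv ωg (flipV αh z true)).mpr ⟨bb, ?_, hbbB⟩
      rw [← hTg, ← hβT, ← hclT]
      exact hbbclT
    have hFalse' : (ωg, flipV αh z false) ∉ Ev := by
      intro hmem
      have h1 := (memEv ωg (flipV αh z false)).mp hmem
      rw [flipV_self αh z (hαh_in z hzball), ← hTg, ← hβh] at h1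
      exact hNoFalse h1
    have hagreeω : ∀ e' : H.edgeSet,
        (∃ w ∈ (e' : Sym2 V), w ∉ edgeBall H e (3 * r + 1)) → ωg e' = c.1 e' := by
      rintro e' ⟨w, hwf, hwb⟩
      refine hωg_def e' ⟨w, hwf, ?_⟩
      intro hle
      exact hwb (hI_ball w hle)
    exact hcon (ωg, αh) z hzball hagreeω hαh_out ⟨hTrue, hFalse'⟩

  rcases hNsplit hbbN with hcase | hcase
  · exact main y0 x0 hadj0.symm (by rw [hes0]; exact Sym2.eq_swap) hcase
  · exact main x0 y0 hadj0 hes0 hcase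


end Percolation
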